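/- Let δ ∈ (0,1) and ρ_1 = ρ_1(α) be the stable subordinator of index α at time 1, with P(ρ_1 ≤ 1−δ) = (1/π)∫_0^π exp(−A(u)/(1−δ)^{α/(1−α)}) du where A is Zolotarev's function. Then lim_{α→1⁻} (1−α)·log log (1/P(ρ_1 ≤ 1−δ)) = log(1/(1−δ)). -/

import Mathlib

open Real Set Filter Topology intervalIntegral

open MeasureTheory


private lemma exp_third_le_two : Real.exp (1/3 : ℝ) ≤ 2 := by
  have h := Real.add_one_le_exp (-(1/3 : ℝ))
  have h2 : Real.exp (1/3 : ℝ) * Real.exp (-(1/3 : ℝ)) = 1 := by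
    rw [← Real.exp_add]; norm_num
  nlinarith [Real.exp_pos (1/3 : ℝ)]

private lemma sin_ge_smul {α u : ℝ} (h0 : 0 ≤ α) (h1 : α ≤ 1) (hu : u ∈ Icc 0 π) :
    α * Real.sin u ≤ Real.sin (α * u) := by
  have h := strictConcaveOn_sin_Icc.concaveOn.2 (⟨le_refl 0, Real.pi_pos.le⟩ : (0:ℝ) ∈ Icc 0 π)
    hu (by linarith : (0:ℝ) ≤ 1 - α) h0 (by ring : (1 - α) + α = 1)
  simpa [smul_eq_mul] using h

private lemma A_lower {α u : ℝ} (hα : α ∈ Ioo (0:ℝ) 1) (hu : u ∈ Ioo 0 π) :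
    (1 - α) * α ^ (α / (1 - α)) ≤
      (Real.sin (α*u) ^ α * Real.sin ((1-α)*u) ^ (1-α) / Real.sin u) ^ (1/(1-α)) := by
  obtain ⟨hα0, hα1⟩ := hα
  obtain ⟨hu0, huπ⟩ := hu
  have ht0 : 0 < 1 - α := by linarith
  have hs : 0 < Real.sin u := Real.sin_pos_of_pos_of_lt_pi hu0 huπ
  have h1 : α * Real.sin u ≤ Real.sin (α * u) := sin_ge_smul hα0.le hα1.le ⟨hu0.le, huπ.le⟩
  have h2 : (1-α) * Real.sin u ≤ Real.sin ((1-α)*u) :=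
    sin_ge_smul ht0.le (by linarith) ⟨hu0.le, huπ.le⟩
  have hsin1 : 0 ≤ Real.sin (α*u) := le_trans (by positivity) h1
  have hsin2 : 0 ≤ Real.sin ((1-α)*u) := le_trans (by positivity) h2
  have e1 : (α * Real.sin u) ^ α ≤ Real.sin (α*u) ^ α :=
    Real.rpow_le_rpow (by positivity) h1 hα0.le
  have e2 : ((1-α) * Real.sin u) ^ (1-α) ≤ Real.sin ((1-α)*u) ^ (1-α) :=
    Real.rpow_le_rpow (by positivity) h2 ht0.le
  have emul : (α * Real.sin u)^α * ((1-α)*Real.sin u)^(1-α) ≤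
      Real.sin (α*u) ^ α * Real.sin ((1-α)*u) ^ (1-α) :=
    mul_le_mul e1 e2 (Real.rpow_nonneg (by positivity) _) (Real.rpow_nonneg hsin1 _)
  have key : (α * Real.sin u) ^ α * ((1 - α) * Real.sin u) ^ (1 - α)
      = α ^ α * (1 - α) ^ (1 - α) * Real.sin u := by
    rw [Real.mul_rpow hα0.le hs.le, Real.mul_rpow ht0.le hs.le, mul_mul_mul_comm]
    congr 1
    rw [← Real.rpow_add hs]; norm_num
  have base_ge : α ^ α * (1-α) ^ (1-α) ≤
      Real.sin (α*u) ^ α * Real.sin ((1-α)*u) ^ (1-α) / Real.sin u := by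
    rw [le_div_iff₀ hs]
    calc α ^ α * (1-α) ^ (1-α) * Real.sin u
        = (α * Real.sin u) ^ α * ((1 - α) * Real.sin u) ^ (1 - α) := key.symm
      _ ≤ _ := emul
  have final := Real.rpow_le_rpow (by positivity) base_ge (by positivity : (0:ℝ) ≤ 1/(1-α))
  refine le_trans (le_of_eq ?_) final
  rw [Real.mul_rpow (by positivity) (by positivity), ← Real.rpow_mul hα0.le,
    ← Real.rpow_mul ht0.le, mul_one_div, mul_one_div, div_self ht0.ne', Real.rpow_one,
    mul_comm]

private lemma A_upper {α u : ℝ} (hα : α ∈ Ioo (0:ℝ) 1) (hu0 : 0 < u) (hu2 : u^2 ≤ 1 - α) :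
    (Real.sin (α*u) ^ α * Real.sin ((1-α)*u) ^ (1-α) / Real.sin u) ^ (1/(1-α))
      ≤ 2 * ((1-α) * α ^ (α/(1-α))) := by
  obtain ⟨hα0, hα1⟩ := hα
  have ht0 : 0 < 1 - α := by linarith
  have ht1 : 1 - α < 1 := by linarith
  have hu1 : u ≤ 1 := by nlinarith
  have huπ : u < π := lt_of_le_of_lt hu1 (by linarith [Real.pi_gt_three])
  have hcube := Real.sin_gt_sub_cube hu0
  have hs_lb : u * (1 - u^2/4) ≤ Real.sin u := by nlinarith
  have hden_pos : 0 < u * (1 - u^2/4) := by nlinarith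
  have hs : 0 < Real.sin u := lt_of_lt_of_le hden_pos hs_lb
  have h1 : Real.sin (α*u) ≤ α * u := (Real.sin_lt (by positivity)).le
  have h2 : Real.sin ((1-α)*u) ≤ (1-α) * u := (Real.sin_lt (by positivity)).le
  have hsin1 : 0 ≤ Real.sin (α*u) :=
    Real.sin_nonneg_of_nonneg_of_le_pi (by positivity) (by nlinarith [Real.pi_gt_three])
  have hsin2 : 0 ≤ Real.sin ((1-α)*u) :=
    Real.sin_nonneg_of_nonneg_of_le_pi (by positivity) (by nlinarith [Real.pi_gt_three])
  have e1 : Real.sin (α*u)^α ≤ (α*u)^α := Real.rpow_le_rpow hsin1 h1 hα0.le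
  have e2 : Real.sin ((1-α)*u)^(1-α) ≤ ((1-α)*u)^(1-α) := Real.rpow_le_rpow hsin2 h2 ht0.le
  have hnum : Real.sin (α*u)^α * Real.sin ((1-α)*u)^(1-α) ≤ α^α * (1-α)^(1-α) * u := by
    calc Real.sin (α*u)^α * Real.sin ((1-α)*u)^(1-α)
        ≤ (α*u)^α * ((1-α)*u)^(1-α) :=
          mul_le_mul e1 e2 (Real.rpow_nonneg hsin2 _) (Real.rpow_nonneg (by positivity) _)
      _ = α^α * (1-α)^(1-α) * u := by
          rw [Real.mul_rpow hα0.le hu0.le, Real.mul_rpow ht0.le hu0.le, mul_mul_mul_comm]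
          congr 1
          rw [← Real.rpow_add hu0]; norm_num
  have hq : 0 < 1 - (1-α)/4 := by linarith
  have hbase : Real.sin (α*u)^α * Real.sin ((1-α)*u)^(1-α) / Real.sin u
      ≤ α^α * (1-α)^(1-α) / (1 - (1-α)/4) := by
    have step1 : Real.sin (α*u)^α * Real.sin ((1-α)*u)^(1-α) / Real.sin u
        ≤ (α^α * (1-α)^(1-α) * u) / (u * (1 - u^2/4)) :=
      div_le_div₀ (by positivity) hnum hden_pos hs_lb
    have step2 : (α^α * (1-α)^(1-α) * u) / (u * (1 - u^2/4))
        = α^α * (1-α)^(1-α) / (1 - u^2/4) := by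
      rw [mul_comm u (1 - u^2/4), mul_div_mul_right _ _ hu0.ne']
    have step3 : α^α * (1-α)^(1-α) / (1 - u^2/4) ≤ α^α * (1-α)^(1-α) / (1 - (1-α)/4) := by
      gcongr
      all_goals first | positivity | linarith
    linarith [step1, step2 ▸ step1, step3]
  have hAle := Real.rpow_le_rpow
    (div_nonneg (mul_nonneg (Real.rpow_nonneg hsin1 _) (Real.rpow_nonneg hsin2 _)) hs.le)
    hbase (by positivity : (0:ℝ) ≤ 1/(1-α))
  have hrw : (α^α * (1-α)^(1-α) / (1 - (1-α)/4))^(1/(1-α))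
      = ((1-α) * α^(α/(1-α))) / ((1 - (1-α)/4)^(1/(1-α))) := by
    rw [Real.div_rpow (by positivity) hq.le, Real.mul_rpow (by positivity) (by positivity),
      ← Real.rpow_mul hα0.le, ← Real.rpow_mul ht0.le, mul_one_div, mul_one_div,
      div_self ht0.ne', Real.rpow_one, mul_comm (α ^ (α/(1-α)))]
  have hlog : Real.log (1 - (1-α)/4) ≥ -((1-α)/3) := by
    have hinv : (0:ℝ) < 1/(1 - (1-α)/4) := by positivity
    have h5 := Real.log_le_sub_one_of_pos hinv
    have h6 : Real.log (1/(1 - (1-α)/4)) = - Real.log (1 - (1-α)/4) := by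
      rw [one_div, Real.log_inv]
    have h7 : 1/(1 - (1-α)/4) - 1 ≤ (1-α)/3 := by
      rw [div_sub' hq.ne', div_le_iff₀ hq]
      nlinarith
    rw [h6] at h5
    linarith
  have hpow_lb : Real.exp (-(1/3 : ℝ)) ≤ (1 - (1-α)/4)^(1/(1-α)) := by
    rw [Real.rpow_def_of_pos hq]
    apply Real.exp_le_exp.2
    have hmul := mul_le_mul_of_nonneg_right hlog.le (by positivity : (0:ℝ) ≤ 1/(1-α))
    have heq : (-((1-α)/3)) * (1/(1-α)) = -(1/3 : ℝ) := by field_simp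
    linarith [heq ▸ hmul]
  calc (Real.sin (α*u) ^ α * Real.sin ((1-α)*u) ^ (1-α) / Real.sin u) ^ (1/(1-α))
      ≤ (α^α * (1-α)^(1-α) / (1 - (1-α)/4))^(1/(1-α)) := hAle
    _ = ((1-α) * α^(α/(1-α))) / ((1 - (1-α)/4)^(1/(1-α))) := hrw
    _ ≤ ((1-α) * α^(α/(1-α))) / Real.exp (-(1/3 : ℝ)) := by
        gcongr
        all_goals first | positivity | exact Real.exp_pos _ | exact hpow_lb
    _ = ((1-α) * α^(α/(1-α))) * Real.exp (1/3 : ℝ) := by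
        rw [Real.exp_neg]; field_simp
    _ ≤ ((1-α) * α^(α/(1-α))) * 2 := by
        exact mul_le_mul_of_nonneg_left exp_third_le_two (by positivity)
    _ = 2 * ((1-α) * α^(α/(1-α))) := by ring

private lemma integrand_meas {α : ℝ} (hα0 : 0 ≤ α) (hα1 : α ≤ 1) (x : ℝ) :
    Measurable (fun u : ℝ => Real.exp
      (-(((Real.sin (α*u))^α * (Real.sin ((1-α)*u))^(1-α) / Real.sin u) ^ (1/(1-α))) / x)) := by
  have m1 : Measurable fun u : ℝ => Real.sin (α*u) ^ α :=
    ((Real.continuous_rpow_const hα0).comp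
      (Real.continuous_sin.comp (continuous_const.mul continuous_id))).measurable
  have m2 : Measurable fun u : ℝ => Real.sin ((1-α)*u) ^ (1-α) :=
    ((Real.continuous_rpow_const (by linarith)).comp
      (Real.continuous_sin.comp (continuous_const.mul continuous_id))).measurable
  have mbase : Measurable fun u : ℝ =>
      (Real.sin (α*u))^α * (Real.sin ((1-α)*u))^(1-α) / Real.sin u :=
    (m1.mul m2).div Real.continuous_sin.measurable
  have mA : Measurable fun u : ℝ =>
      (((Real.sin (α*u))^α * (Real.sin ((1-α)*u))^(1-α) / Real.sin u) ^ (1/(1-α))) :=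
    (Real.continuous_rpow_const (div_nonneg zero_le_one (by linarith))).measurable.comp mbase
  exact Real.continuous_exp.measurable.comp (mA.neg.div_const x)



set_option maxHeartbeats 1000000 in
/-- Let `δ ∈ (0,1)` and let `p α = P(ρ₁ ≤ 1−δ)` for the stable subordinator of index `α`,
given by the Pollard/Kanter representation
`p α = (1/π) ∫_0^π exp(−A_α(u)/(1−δ)^(α/(1−α))) du` with `A_α` Zolotarev's function.
Then `(1−α)·log log (1/p α) → log(1/(1−δ))` as `α → 1⁻`. -/
theorem stmt_10 (δ : ℝ) (hδ : δ ∈ Ioo (0 : ℝ) 1)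
    (A : ℝ → ℝ → ℝ)
    (hA : ∀ α u, A α u =
      ((Real.sin (α * u)) ^ α * (Real.sin ((1 - α) * u)) ^ (1 - α) / Real.sin u)
        ^ (1 / (1 - α)))
    (p : ℝ → ℝ)
    (hp : ∀ α ∈ Ioo (0 : ℝ) 1,
      p α = (1 / π) * ∫ u in (0:ℝ)..π,
        Real.exp (-A α u / (1 - δ) ^ (α / (1 - α)))) :
    Tendsto (fun α : ℝ => (1 - α) * Real.log (Real.log (1 / p α)))
      (𝓝[Ioo (0 : ℝ) 1] 1) (𝓝 (Real.log (1 / (1 - δ)))) := by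
  obtain ⟨hδ0, hδ1⟩ := hδ
  have hd0 : (0:ℝ) < 1 - δ := by linarith
  set L : ℝ := Real.log (1 / (1 - δ)) with hL
  have hLneg : L = - Real.log (1-δ) := by rw [hL, one_div, Real.log_inv]
  have hLpos : 0 < L := by
    rw [hLneg]
    have := Real.log_neg hd0 (by linarith)
    linarith
  have hπ3 : (3:ℝ) < π := Real.pi_gt_three
  -- squeeze functions
  set g : ℝ → ℝ := fun α => (1-α)*Real.log (1-α) + α*Real.log α + α*L with hg
  set h : ℝ → ℝ := fun α => 2*((1-α)*Real.log 2) + (1-α)*Real.log (Real.log (π/Real.sqrt (1-α)))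
    + ((1-α)*Real.log (1-α) + α*Real.log α + α*L) with hh
  -- basic limits at 1
  have tends_sub : Tendsto (fun α:ℝ => 1-α) (𝓝 (1:ℝ)) (𝓝 0) := by
    have : Tendsto (fun α:ℝ => 1-α) (𝓝 (1:ℝ)) (𝓝 (1-1)) :=
      (continuous_const.sub continuous_id).tendsto 1
    simpa using this
  have t1 : Tendsto (fun α:ℝ => (1-α)*Real.log (1-α)) (𝓝 (1:ℝ)) (𝓝 0) := by
    have h0 := (Real.continuous_mul_log.tendsto 0).comp tends_sub
    simpa [Function.comp_def] using h0
  have t2 : Tendsto (fun α:ℝ => α*Real.log α) (𝓝 (1:ℝ)) (𝓝 0) := by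
    have h0 := Real.continuous_mul_log.tendsto 1
    simpa using h0
  have t3 : Tendsto (fun α:ℝ => α*L) (𝓝 (1:ℝ)) (𝓝 L) := by
    have h0 := ((continuous_id (X := ℝ)).mul (continuous_const (y := L))).tendsto (1:ℝ)
    simpa [Pi.mul_def] using h0
  have hmem : ∀ᶠ α in 𝓝[Ioo (0:ℝ) 1] (1:ℝ), α ∈ Ioo (0:ℝ) 1 :=
    Filter.eventually_of_mem self_mem_nhdsWithin (fun x hx => hx)
  have hπe : (1:ℝ) ≤ Real.log π := by
    have he : Real.exp 1 ≤ π := by nlinarith [Real.exp_one_lt_d9]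
    calc (1:ℝ) = Real.log (Real.exp 1) := (Real.log_exp 1).symm
      _ ≤ Real.log π := Real.log_le_log (Real.exp_pos 1) he
  -- facts about a(α) = log (π / sqrt (1-α)) for α ∈ Ioo 0 1
  have haux : ∀ α ∈ Ioo (0:ℝ) 1, (1:ℝ) ≤ Real.log (π/Real.sqrt (1-α)) ∧
      Real.log (π/Real.sqrt (1-α)) = Real.log π - Real.log (1-α)/2 := by
    intro α hα
    obtain ⟨hα0, hα1⟩ := hα
    have ht0 : (0:ℝ) < 1 - α := by linarith
    have hsq0 : 0 < Real.sqrt (1-α) := Real.sqrt_pos.2 ht0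
    have hsq1 : Real.sqrt (1-α) ≤ 1 := Real.sqrt_le_one.2 (by linarith)
    have hππ : π ≤ π/Real.sqrt (1-α) := by
      rw [le_div_iff₀ hsq0]
      nlinarith [Real.pi_pos]
    constructor
    · calc (1:ℝ) ≤ Real.log π := hπe
        _ ≤ Real.log (π/Real.sqrt (1-α)) := Real.log_le_log Real.pi_pos hππ
    · rw [Real.log_div Real.pi_ne_zero hsq0.ne', Real.log_sqrt ht0.le]
  -- the log log term tends to 0 within the filter
  have t4 : Tendsto (fun α:ℝ => (1-α)*Real.log (Real.log (π/Real.sqrt (1-α))))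
      (𝓝[Ioo (0:ℝ) 1] 1) (𝓝 0) := by
    have hup : Tendsto (fun α:ℝ => (1-α)*Real.log π - (1/2)*((1-α)*Real.log (1-α)))
        (𝓝[Ioo (0:ℝ) 1] 1) (𝓝 0) := by
      have h1 : Tendsto (fun α:ℝ => (1-α)*Real.log π) (𝓝 (1:ℝ)) (𝓝 0) := by
        have := tends_sub.mul_const (Real.log π); simpa using this
      have h2 := h1.sub (t1.const_mul (1/2))
      simpa using h2.mono_left nhdsWithin_le_nhds
    apply tendsto_of_tendsto_of_tendsto_of_le_of_le' tendsto_const_nhds hup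
    · filter_upwards [hmem] with α hα
      obtain ⟨h1, _⟩ := haux α hα
      have : 0 ≤ Real.log (Real.log (π/Real.sqrt (1-α))) :=
        Real.log_nonneg h1
      have ht0 : (0:ℝ) ≤ 1 - α := by linarith [hα.2]
      positivity
    · filter_upwards [hmem] with α hα
      obtain ⟨h1, h2⟩ := haux α hα
      have ht0 : (0:ℝ) < 1 - α := by linarith [hα.2]
      have h3 : Real.log (Real.log (π/Real.sqrt (1-α))) ≤ Real.log (π/Real.sqrt (1-α)) := by
        linarith [Real.log_le_sub_one_of_pos (show (0:ℝ) < Real.log (π/Real.sqrt (1-α)) by linarith)]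
      have h4 := mul_le_mul_of_nonneg_left h3 ht0.le
      calc (1-α)*Real.log (Real.log (π/Real.sqrt (1-α)))
          ≤ (1-α)*(Real.log π - Real.log (1-α)/2) := by rw [← h2]; exact h4
        _ = (1-α)*Real.log π - (1/2)*((1-α)*Real.log (1-α)) := by ring
  have tg : Tendsto g (𝓝[Ioo (0:ℝ) 1] 1) (𝓝 L) := by
    have := ((t1.add t2).add t3).mono_left (nhdsWithin_le_nhds (s := Ioo (0:ℝ) 1))
    simpa [hg] using this
  have th : Tendsto h (𝓝[Ioo (0:ℝ) 1] 1) (𝓝 L) := by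
    have h5 : Tendsto (fun α:ℝ => 2*((1-α)*Real.log 2)) (𝓝 (1:ℝ)) (𝓝 0) := by
      have := (tends_sub.mul_const (Real.log 2)).const_mul 2; simpa using this
    have := ((h5.mono_left nhdsWithin_le_nhds).add t4).add
      (((t1.add t2).add t3).mono_left nhdsWithin_le_nhds)
    simpa [hh] using this
  -- eventual conditions
  have E1 : ∀ᶠ α in 𝓝[Ioo (0:ℝ) 1] (1:ℝ), L/2 ≤ α*Real.log α + α*L := by
    have := (t2.add t3).mono_left (nhdsWithin_le_nhds (s := Ioo (0:ℝ) 1))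
    simp only [zero_add] at this
    exact this.eventually (eventually_ge_nhds (by linarith : L/2 < L))
  have E2 : ∀ᶠ α in 𝓝[Ioo (0:ℝ) 1] (1:ℝ), 1 - α ≤ L^2/8 := by
    have := tends_sub.mono_left (nhdsWithin_le_nhds (s := Ioo (0:ℝ) 1))
    exact this.eventually (eventually_le_nhds (by positivity : (0:ℝ) < L^2/8))
  have key : ∀ᶠ α in 𝓝[Ioo (0:ℝ) 1] (1:ℝ),
      g α ≤ (1-α)*Real.log (Real.log (1/p α)) ∧
      (1-α)*Real.log (Real.log (1/p α)) ≤ h α := by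
    filter_upwards [hmem, E1, E2] with α hα hE1 hE2
    simp only [hg, hh]
    obtain ⟨hα0, hα1⟩ := hα
    have ht0 : (0:ℝ) < 1 - α := by linarith
    have hpα := hp α ⟨hα0, hα1⟩
    set x := (1-δ) ^ (α/(1-α)) with hxd
    have hx0 : 0 < x := Real.rpow_pos_of_pos hd0 _
    set c := (1-α) * α ^ (α/(1-α)) with hcd
    have hc0 : 0 < c := mul_pos ht0 (Real.rpow_pos_of_pos hα0 _)
    set f : ℝ → ℝ := fun u => Real.exp (-A α u / x) with hfd
    have hf_pos : ∀ u, 0 < f u := fun u => Real.exp_pos _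
    have hf_meas : Measurable f := by
      rw [hfd]; simp only [hA]; exact integrand_meas hα0.le hα1.le x
    have hA0 : ∀ u ∈ Icc (0:ℝ) π, 0 ≤ A α u := by
      intro u hu
      rw [hA]
      apply Real.rpow_nonneg
      apply div_nonneg _ (Real.sin_nonneg_of_nonneg_of_le_pi hu.1 hu.2)
      apply mul_nonneg (Real.rpow_nonneg ?_ _) (Real.rpow_nonneg ?_ _)
      · exact Real.sin_nonneg_of_nonneg_of_le_pi (mul_nonneg hα0.le hu.1)
          (le_trans (mul_le_of_le_one_left hu.1 hα1.le) hu.2)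
      · exact Real.sin_nonneg_of_nonneg_of_le_pi (mul_nonneg ht0.le hu.1)
          (le_trans (mul_le_of_le_one_left hu.1 (by linarith)) hu.2)
    have hint : IntervalIntegrable f volume 0 π := by
      rw [intervalIntegrable_iff]
      apply Measure.integrableOn_of_bounded (M := 1)
      · rw [Set.uIoc_of_le Real.pi_pos.le]
        exact measure_Ioc_lt_top.ne
      · exact hf_meas.aestronglyMeasurable
      · filter_upwards [ae_restrict_mem measurableSet_uIoc] with u hu
        rw [Set.uIoc_of_le Real.pi_pos.le] at hu
        have hu' : u ∈ Icc (0:ℝ) π := ⟨hu.1.le, hu.2⟩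
        rw [hfd]
        rw [Real.norm_eq_abs, abs_of_pos (Real.exp_pos _)]
        apply Real.exp_le_one_iff.2
        have h9 := div_nonneg (hA0 u hu') hx0.le
        rw [neg_div]
        linarith only [h9]
    have hAc : f ≤ᵐ[volume.restrict (Icc (0:ℝ) π)] fun _ => Real.exp (-c/x) := by
      have hnotmem : ∀ᵐ u ∂(volume : Measure ℝ), u ∉ ({0, π} : Set ℝ) := by
        have hcnt : ({0, π} : Set ℝ).Countable := (Set.countable_singleton _).insert _
        exact hcnt.ae_notMem volume
      filter_upwards [ae_restrict_of_ae hnotmem, ae_restrict_mem measurableSet_Icc]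
        with u hu1 hu2
      simp only [Set.mem_insert_iff, Set.mem_singleton_iff, not_or] at hu1
      have huI : u ∈ Ioo (0:ℝ) π :=
        ⟨lt_of_le_of_ne hu2.1 (Ne.symm hu1.1), lt_of_le_of_ne hu2.2 hu1.2⟩
      show Real.exp (-A α u / x) ≤ Real.exp (-c/x)
      apply Real.exp_le_exp.2
      rw [neg_div, neg_div, neg_le_neg_iff]
      apply div_le_div_of_nonneg_right ?_ hx0.le
      rw [hA, hcd]
      exact A_lower ⟨hα0, hα1⟩ huI
    have hIup : ∫ u in (0:ℝ)..π, f u ≤ π * Real.exp (-c/x) := by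
      have h0 := intervalIntegral.integral_mono_ae_restrict Real.pi_pos.le hint
        intervalIntegrable_const hAc
      rwa [intervalIntegral.integral_const, sub_zero, smul_eq_mul] at h0
    have hp_le : p α ≤ Real.exp (-c/x) := by
      rw [hpα]
      calc (1/π) * ∫ u in (0:ℝ)..π, f u ≤ (1/π) * (π * Real.exp (-c/x)) :=
            mul_le_mul_of_nonneg_left hIup (by positivity)
        _ = Real.exp (-c/x) := by field_simp
    -- lower bound on p
    set η := Real.sqrt (1-α) with hηd
    have hη0 : 0 < η := Real.sqrt_pos.2 ht0
    have hη1 : η ≤ 1 := Real.sqrt_le_one.2 (by linarith)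
    have hηπ : η ≤ π := by linarith
    have hAM : ∀ u ∈ Icc (0:ℝ) η, Real.exp (-(2*c)/x) ≤ f u := by
      intro u hu
      show Real.exp (-(2*c)/x) ≤ Real.exp (-A α u / x)
      apply Real.exp_le_exp.2
      rw [neg_div, neg_div, neg_le_neg_iff]
      apply div_le_div_of_nonneg_right ?_ hx0.le
      rcases eq_or_lt_of_le hu.1 with h0 | h0
      · have e0 : A α 0 = 0 := by
          rw [hA]
          simp [Real.zero_rpow hα0.ne', Real.zero_rpow (one_div_ne_zero ht0.ne'), Real.zero_rpow (inv_ne_zero ht0.ne')]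
        rw [← h0, e0]
        linarith
      · rw [hA, hcd]
        have hu2 : u^2 ≤ 1-α := by
          have h5 := mul_self_le_mul_self h0.le hu.2
          have hηsq : η*η = 1-α := Real.mul_self_sqrt ht0.le
          nlinarith
        exact A_upper ⟨hα0, hα1⟩ h0 hu2
    have hsub1 : Set.uIcc (0:ℝ) η ⊆ Set.uIcc (0:ℝ) π := by
      rw [Set.uIcc_of_le hη0.le, Set.uIcc_of_le Real.pi_pos.le]
      exact Icc_subset_Icc le_rfl hηπ
    have hsub2 : Set.uIcc η π ⊆ Set.uIcc (0:ℝ) π := by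
      rw [Set.uIcc_of_le hηπ, Set.uIcc_of_le Real.pi_pos.le]
      exact Icc_subset_Icc hη0.le le_rfl
    have hsubint1 : IntervalIntegrable f volume 0 η := hint.mono_set hsub1
    have hsubint2 : IntervalIntegrable f volume η π := hint.mono_set hsub2
    have hIlo : η * Real.exp (-(2*c)/x) ≤ ∫ u in (0:ℝ)..π, f u := by
      have h1 : ∫ u in (0:ℝ)..η, Real.exp (-(2*c)/x) ≤ ∫ u in (0:ℝ)..η, f u :=
        intervalIntegral.integral_mono_on hη0.le intervalIntegrable_const hsubint1 hAM
      rw [intervalIntegral.integral_const, sub_zero, smul_eq_mul] at h1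
      have h2 : (0:ℝ) ≤ ∫ u in η..π, f u :=
        intervalIntegral.integral_nonneg hηπ (fun u _ => (hf_pos u).le)
      have h3 := intervalIntegral.integral_add_adjacent_intervals hsubint1 hsubint2
      linarith
    have hp_ge : (η/π) * Real.exp (-(2*c)/x) ≤ p α := by
      rw [hpα]
      calc (η/π) * Real.exp (-(2*c)/x) = (1/π) * (η * Real.exp (-(2*c)/x)) := by ring
        _ ≤ _ := mul_le_mul_of_nonneg_left hIlo (by positivity)
    have hp_pos : 0 < p α :=
      lt_of_lt_of_le (mul_pos (div_pos hη0 Real.pi_pos) (Real.exp_pos _)) hp_ge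
    -- log bounds
    have hlog1 : c/x ≤ Real.log (1/p α) := by
      have h1 : Real.exp (c/x) ≤ 1/p α := by
        rw [le_div_iff₀ hp_pos]
        calc Real.exp (c/x) * p α ≤ Real.exp (c/x) * Real.exp (-c/x) :=
              mul_le_mul_of_nonneg_left hp_le (Real.exp_pos _).le
          _ = 1 := by rw [← Real.exp_add, show c/x + -c/x = 0 from by ring, Real.exp_zero]
      calc c/x = Real.log (Real.exp (c/x)) := (Real.log_exp _).symm
        _ ≤ _ := Real.log_le_log (Real.exp_pos _) h1
    have hlogp_pos : 0 < Real.log (1/p α) :=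
      lt_of_lt_of_le (div_pos hc0 hx0) hlog1
    have hlog2 : Real.log (1/p α) ≤ Real.log (π/η) + 2*c/x := by
      have h1 : 1/p α ≤ (π/η) * Real.exp ((2*c)/x) := by
        rw [div_le_iff₀ hp_pos]
        have h2 := mul_le_mul_of_nonneg_left hp_ge
          (le_of_lt (mul_pos (div_pos Real.pi_pos hη0) (Real.exp_pos ((2*c)/x))))
        calc (1:ℝ) = ((π/η) * Real.exp ((2*c)/x)) * ((η/π) * Real.exp (-(2*c)/x)) := by
              rw [mul_mul_mul_comm, ← Real.exp_add,
                show (2*c)/x + (-(2*c)/x) = 0 from by ring, Real.exp_zero, mul_one]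
              field_simp
          _ ≤ _ := h2
      calc Real.log (1/p α) ≤ Real.log ((π/η) * Real.exp ((2*c)/x)) :=
            Real.log_le_log (by positivity) h1
        _ = Real.log (π/η) + 2*c/x := by
            rw [Real.log_mul (div_pos Real.pi_pos hη0).ne' (Real.exp_ne_zero _), Real.log_exp]
    have ha1 : (1:ℝ) ≤ Real.log (π/η) := by rw [hηd]; exact (haux α ⟨hα0, hα1⟩).1
    have hb1 : (1:ℝ) ≤ 2*c/x := by
      have hbexp : 2*c/x = 2*(1-α) * Real.exp ((α*Real.log α + α*L)/(1-α)) := by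
        rw [hcd, hxd, Real.rpow_def_of_pos hα0, Real.rpow_def_of_pos hd0,
          show (2*((1-α)*Real.exp (Real.log α*(α/(1-α)))))/Real.exp (Real.log (1-δ)*(α/(1-α)))
            = 2*(1-α)*(Real.exp (Real.log α*(α/(1-α)))/Real.exp (Real.log (1-δ)*(α/(1-α))))
            from by ring, ← Real.exp_sub]
        congr 1
        rw [hLneg]
        field_simp
        ring
      rw [hbexp]
      have hyineq : (L/2)/(1-α) ≤ (α*Real.log α + α*L)/(1-α) := by gcongr
      have hexp2 : Real.exp ((L/2)/(1-α)) ≤ Real.exp ((α*Real.log α + α*L)/(1-α)) :=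
        Real.exp_le_exp.2 hyineq
      set y := (L/2)/(1-α) with hyd
      have hy0 : 0 ≤ y := by positivity
      have h4 : Real.exp (y/2) * Real.exp (y/2) = Real.exp y := by
        rw [← Real.exp_add]; congr 1; ring
      have hy24 : (y/2)^2 ≤ Real.exp y := by
        have h3 := Real.add_one_le_exp (y/2)
        have h5 : (y/2)^2 ≤ Real.exp (y/2) * Real.exp (y/2) := by
          have h6 : (y/2)^2 ≤ (y/2 + 1)^2 := by nlinarith only [hy0]
          have h7 : (y/2 + 1)^2 ≤ Real.exp (y/2) * Real.exp (y/2) := by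
            nlinarith only [h3, hy0, Real.exp_pos (y/2)]
          linarith only [h6, h7]
        linarith only [h5, h4.ge, h4.le]
      have hcomp : 2*(1-α)*((y/2)^2) = L^2/(8*(1-α)) := by
        rw [hyd]; field_simp; ring
      have hfin : (1:ℝ) ≤ L^2/(8*(1-α)) := by
        rw [le_div_iff₀ (by positivity : (0:ℝ) < 8*(1-α))]
        nlinarith only [hE2, ht0, hLpos]
      calc (1:ℝ) ≤ L^2/(8*(1-α)) := hfin
        _ = 2*(1-α)*((y/2)^2) := hcomp.symm
        _ ≤ 2*(1-α)*Real.exp y := by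
            exact mul_le_mul_of_nonneg_left hy24 (by linarith only [ht0])
        _ ≤ 2*(1-α)*Real.exp ((α*Real.log α + α*L)/(1-α)) := by
            exact mul_le_mul_of_nonneg_left hexp2 (by linarith only [ht0])
    constructor
    · -- lower squeeze
      have h1 : Real.log (c/x) ≤ Real.log (Real.log (1/p α)) :=
        Real.log_le_log (div_pos hc0 hx0) hlog1
      have h2 := mul_le_mul_of_nonneg_left h1 ht0.le
      refine le_trans (le_of_eq ?_) h2
      rw [hcd, hxd, Real.log_div (mul_pos ht0 (Real.rpow_pos_of_pos hα0 _)).ne'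
        (Real.rpow_pos_of_pos hd0 _).ne',
        Real.log_mul ht0.ne' (Real.rpow_pos_of_pos hα0 _).ne',
        Real.log_rpow hα0, Real.log_rpow hd0, hLneg]
      field_simp
      ring
    · -- upper squeeze
      have hab2 : Real.log (1/p α) ≤ 2*(Real.log (π/η) * (2*c/x)) := by
        nlinarith only [hlog2, ha1, hb1]
      have h1 : Real.log (Real.log (1/p α)) ≤ Real.log (2*(Real.log (π/η) * (2*c/x))) :=
        Real.log_le_log hlogp_pos hab2
      have hlogπη : (0:ℝ) < Real.log (π/η) := by linarith
      have hbpos : (0:ℝ) < 2*c/x := by linarith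
      have h2 : Real.log (2*(Real.log (π/η) * (2*c/x))) =
          Real.log 2 + Real.log (Real.log (π/η)) + Real.log (2*c/x) := by
        rw [Real.log_mul two_ne_zero (mul_pos hlogπη hbpos).ne',
          Real.log_mul hlogπη.ne' hbpos.ne']
        ring
      have h3 := mul_le_mul_of_nonneg_left (le_trans h1 (le_of_eq h2)) ht0.le
      refine le_trans h3 (le_of_eq ?_)
      have hlogb : Real.log (2*c/x) =
          Real.log 2 + Real.log (1-α) + (α/(1-α))*Real.log α + (α/(1-α))*L := by
        rw [Real.log_div (mul_pos two_pos hc0).ne' hx0.ne',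
          Real.log_mul two_ne_zero hc0.ne', hcd,
          Real.log_mul ht0.ne' (Real.rpow_pos_of_pos hα0 _).ne',
          Real.log_rpow hα0, hxd, Real.log_rpow hd0, hLneg]
        ring
      rw [hlogb, hηd]
      field_simp
      ring
  exact tendsto_of_tendsto_of_tendsto_of_le_of_le' tg th
    (key.mono fun α hk => hk.1) (key.mono fun α hk => hk.2)
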